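/- Let n = 2k, i ≥ 0, and h a permutation of F_{2^k}. Then for any α ∈ F_{2^n} \ F_{2^k}, the function x ↦ Tr^n_k(α x^{2^i} h(Tr^n_k(x))) is a vectorial bent (n,k)-function, i.e., Tr^k_1(β · Tr^n_k(α x^{2^i}h(Tr^n_k(x)))) is bent for every nonzero β ∈ F_{2^k}. -/

import Mathlib

open Finset

def chr (b : ZMod 2) : ℤ := if b = 0 then 1 else -1

variable {K : Type*} [Field K] [Fintype K] [Algebra (ZMod 2) K]

/-- The absolute trace `Tr^n_1 : F_{2^n} → F_2`. -/
noncomputable def tr (x : K) : ZMod 2 := Algebra.trace (ZMod 2) K x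

/-- The Walsh transform of a Boolean function `f` on `K = F_{2^n}`. -/
noncomputable def walshF (f : K → ZMod 2) (l : K) : ℤ :=
  ∑ x, chr (f x + tr (l * x))

/-- `f` is bent on `K = F_{2^{2k}}`: all Walsh values are `±2^k`. -/
def IsBentF (k : ℕ) (f : K → ZMod 2) : Prop :=
  ∀ l : K, walshF f l = 2 ^ k ∨ walshF f l = -(2 ^ k)

open scoped Classical in
/-- The absolute trace `Tr^k_1` of the subfield `F_{2^k} = {a : K | a^{2^k} = a}`:
for `y` in this subfield, `∑_{j<k} y^{2^j}` lies in the prime field `{0,1}` and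
`trk k y` is the corresponding element of `F_2`. -/
noncomputable def trk (k : ℕ) (y : K) : ZMod 2 :=
  if ∑ j ∈ Finset.range k, y ^ (2 ^ j) = 0 then 0 else 1


open scoped Classical

set_option linter.unusedSectionVars false
set_option maxHeartbeats 1000000

lemma charK : CharP K 2 :=
  charP_of_injective_algebraMap (algebraMap (ZMod 2) K).injective 2

lemma add_pow2pow (j : ℕ) (x y : K) : (x + y) ^ 2 ^ j = x ^ 2 ^ j + y ^ 2 ^ j := by
  haveI := charK (K := K)
  exact add_pow_char_pow ..

lemma pow2pow_inj (j : ℕ) : Function.Injective fun x : K => x ^ 2 ^ j := by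
  haveI := charK (K := K)
  have := (iterateFrobenius K 2 j).injective
  exact this

lemma pow2pow_surj (j : ℕ) : Function.Surjective fun x : K => x ^ 2 ^ j :=
  Finite.surjective_of_injective (pow2pow_inj j)

noncomputable def frobA : K ≃ₐ[ZMod 2] K := by
  haveI := charK (K := K)
  exact AlgEquiv.ofBijective
    { toRingHom := frobenius K 2,
      commutes' := by
        intro r
        have h2 : r ^ 2 = r := by revert r; decide
        simp [frobenius_def, ← map_pow, h2] }
    ⟨frobenius_inj K 2, Finite.surjective_of_injective (frobenius_inj K 2)⟩

lemma frobA_apply (x : K) : frobA x = x ^ 2 := by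
  haveI := charK (K := K)
  rfl

lemma frobA_pow_apply (j : ℕ) (x : K) : ((frobA ^ j : K ≃ₐ[ZMod 2] K)) x = x ^ 2 ^ j := by
  induction j generalizing x with
  | zero => simp
  | succ m ih =>
    rw [pow_succ, AlgEquiv.mul_apply, frobA_apply, ih, ← pow_mul]
    congr 1
    rw [pow_succ]
    ring

set_option linter.unusedSectionVars false

open Polynomial in
open Polynomial in
lemma card_filter_pow_le (m : ℕ) (hm : 2 ≤ m) :
    (Finset.univ.filter fun x : K => x ^ m = x).card ≤ m := by
  have hmonic : (X ^ m - X : K[X]).Monic := by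
    apply monic_X_pow_sub
    rw [degree_X]
    exact_mod_cast (by omega : 1 < m)
  have hne : (X ^ m - X : K[X]) ≠ 0 := hmonic.ne_zero
  have hdeg : (X ^ m - X : K[X]).natDegree = m := by
    have : (X : K[X]).degree < (X ^ m : K[X]).degree := by
      rw [degree_X, degree_X_pow]
      exact_mod_cast by omega
    rw [natDegree_sub_eq_left_of_natDegree_lt]
    · exact natDegree_X_pow m
    · rw [natDegree_X, natDegree_X_pow]; omega
  have hsub : (Finset.univ.filter fun x : K => x ^ m = x) ⊆ (X ^ m - X : K[X]).roots.toFinset := by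
    intro x hx
    simp only [Finset.mem_filter] at hx
    rw [Multiset.mem_toFinset, mem_roots hne]
    simp [hx.2]
  calc (Finset.univ.filter fun x : K => x ^ m = x).card
      ≤ (X ^ m - X : K[X]).roots.toFinset.card := Finset.card_le_card hsub
  _ ≤ Multiset.card (X ^ m - X : K[X]).roots := Multiset.toFinset_card_le _
  _ ≤ (X ^ m - X : K[X]).natDegree := card_roots' _
  _ = m := hdeg

lemma trace_formula (k : ℕ) (hcard : Fintype.card K = 2 ^ (2 * k)) (x : K) :
    algebraMap (ZMod 2) K (tr x) = ∑ j ∈ range (2 * k), x ^ 2 ^ j := by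
  have hrank : Module.finrank (ZMod 2) K = 2 * k := by
    have h1 : Fintype.card K = Fintype.card (ZMod 2) ^ Module.finrank (ZMod 2) K :=
      Module.card_eq_pow_finrank
    rw [ZMod.card, hcard] at h1
    exact (Nat.pow_right_injective le_rfl h1.symm)
  have hgal : Fintype.card (K ≃ₐ[ZMod 2] K) = 2 * k := by
    rw [Fintype.card_eq_nat_card, IsGalois.card_aut_eq_finrank, hrank]
  -- the map j ↦ frobA ^ j from Fin (2k) is bijective
  have hinj : Function.Injective (fun j : Fin (2 * k) => (frobA ^ (j : ℕ) : K ≃ₐ[ZMod 2] K)) := by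
    intro a b hab
    by_contra hne
    wlog hlt : (a : ℕ) < (b : ℕ) generalizing a b
    · exact this hab.symm (Ne.symm hne) (by omega)
    · -- then x ^ 2 ^ (b - a) = x for all x
      have key : ∀ x : K, x ^ 2 ^ ((b : ℕ) - (a : ℕ)) = x := by
        intro x
        obtain ⟨y, hy⟩ := pow2pow_surj (K := K) (a : ℕ) x
        have := congrArg (fun σ : K ≃ₐ[ZMod 2] K => σ y) hab
        simp only [frobA_pow_apply] at this
        have h2 : (y ^ 2 ^ (a : ℕ)) ^ 2 ^ ((b : ℕ) - (a : ℕ)) = y ^ 2 ^ (b : ℕ) := by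
          rw [← pow_mul, ← pow_add]
          have hexp : (a : ℕ) + ((b : ℕ) - (a : ℕ)) = (b : ℕ) := by omega
          rw [hexp]
        rw [← hy]
        simp only
        rw [h2, ← this]
      have hle : Fintype.card K ≤ 2 ^ ((b : ℕ) - (a : ℕ)) := by
        have hsub : (Finset.univ.filter fun x : K => x ^ 2 ^ ((b : ℕ) - (a : ℕ)) = x) =
            Finset.univ := by
          ext x; simp [key x]
        have := card_filter_pow_le (K := K) (2 ^ ((b : ℕ) - (a : ℕ))) (by
          have h1 : 1 ≤ (b : ℕ) - (a : ℕ) := by omega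
          calc 2 = 2 ^ 1 := rfl
          _ ≤ 2 ^ ((b:ℕ) - (a:ℕ)) := Nat.pow_le_pow_right (by norm_num) h1)
        rwa [hsub, Finset.card_univ] at this
      rw [hcard] at hle
      have : (b : ℕ) - (a : ℕ) < 2 * k := by omega
      have := Nat.pow_lt_pow_right (a := 2) (by norm_num) this
      omega
  have hbij : Function.Bijective (fun j : Fin (2 * k) => (frobA ^ (j : ℕ) : K ≃ₐ[ZMod 2] K)) := by
    rw [Fintype.bijective_iff_injective_and_card]
    exact ⟨hinj, by simp [hgal]⟩
  rw [tr, trace_eq_sum_automorphisms]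
  rw [← Fintype.sum_bijective _ hbij (fun j : Fin (2 * k) => x ^ 2 ^ (j : ℕ))
    (fun σ : K ≃ₐ[ZMod 2] K => σ x) (fun j => (frobA_pow_apply (j : ℕ) x).symm)]
  rw [Fin.sum_univ_eq_sum_range (fun j => x ^ 2 ^ j) (2 * k)]

lemma tr_add (x y : K) : tr (x + y) = tr x + tr y := by
  simp [tr, map_add]

lemma pow_card_K {k : ℕ} (hcard : Fintype.card K = 2 ^ (2 * k)) (x : K) :
    x ^ 2 ^ (2 * k) = x := by
  rw [← hcard]; exact FiniteField.pow_card x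

lemma tr_pow2 {k : ℕ} (hk : 0 < k) (hcard : Fintype.card K = 2 ^ (2 * k)) (x : K) :
    tr (x ^ 2) = tr x := by
  apply (algebraMap (ZMod 2) K).injective
  rw [trace_formula k hcard, trace_formula k hcard]
  have hA : ∑ j ∈ range (2 * k), (x ^ 2) ^ 2 ^ j = ∑ j ∈ Ico 1 (2 * k + 1), x ^ 2 ^ j := by
    rw [Finset.sum_Ico_eq_sum_range]
    simp only [Nat.add_sub_cancel]
    apply Finset.sum_congr rfl
    intro j _
    rw [← pow_mul, pow_add, pow_one]
  have hB : ∑ j ∈ Ico 1 (2 * k + 1), x ^ 2 ^ j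
      = ∑ j ∈ Ico 1 (2 * k), x ^ 2 ^ j + x ^ 2 ^ (2 * k) :=
    Finset.sum_Ico_succ_top (by omega) _
  have hC : ∑ j ∈ range (2 * k), x ^ 2 ^ j = x ^ 2 ^ 0 + ∑ j ∈ Ico 1 (2 * k), x ^ 2 ^ j := by
    rw [range_eq_Ico]
    exact Finset.sum_eq_sum_Ico_succ_bot (by omega) _
  rw [hA, hB, hC, pow_card_K hcard, pow_zero, pow_one, add_comm]

lemma tr_pow2pow {k : ℕ} (hk : 0 < k) (hcard : Fintype.card K = 2 ^ (2 * k)) (m : ℕ) (x : K) :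
    tr (x ^ 2 ^ m) = tr x := by
  induction m generalizing x with
  | zero => simp
  | succ n ih =>
    have : x ^ 2 ^ (n + 1) = (x ^ 2) ^ 2 ^ n := by
      rw [← pow_mul, ← pow_succ']
    rw [this, ih, tr_pow2 hk hcard]

open Polynomial in
lemma exists_tr_one {k : ℕ} (hk : 0 < k) (hcard : Fintype.card K = 2 ^ (2 * k)) :
    ∃ x : K, tr x = 1 := by
  by_contra hcon
  push_neg at hcon
  have h0 : ∀ x : K, tr x = 0 := by
    intro x
    have := hcon x
    revert this
    generalize tr x = b
    revert b; decide
  set P : K[X] := ∑ j ∈ range (2 * k), X ^ 2 ^ j with hP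
  have hroot : ∀ x : K, P.eval x = 0 := by
    intro x
    have := trace_formula k hcard x
    rw [h0 x, map_zero] at this
    rw [hP]
    simp only [eval_finset_sum, eval_pow, eval_X]
    exact this.symm
  have hPne : P ≠ 0 := by
    intro hzero
    have hcoeff : P.coeff (2 ^ (2 * k - 1)) = 1 := by
      rw [hP, finset_sum_coeff]
      have : ∀ j ∈ range (2 * k), (X ^ 2 ^ j : K[X]).coeff (2 ^ (2 * k - 1))
          = if j = 2 * k - 1 then 1 else 0 := by
        intro j _
        rw [coeff_X_pow]
        congr 1
        simp only [eq_iff_iff]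
        constructor
        · intro hj; exact (Nat.pow_right_injective le_rfl hj).symm
        · intro hj; rw [hj]
      rw [Finset.sum_congr rfl this, Finset.sum_ite_eq' (range (2 * k)) (2 * k - 1) (fun _ => (1:K))]
      simp only [Finset.mem_range]
      rw [if_pos (by omega)]
    rw [hzero] at hcoeff
    simp at hcoeff
  have hdeg : P.natDegree ≤ 2 ^ (2 * k - 1) := by
    rw [hP]
    apply Polynomial.natDegree_sum_le_of_forall_le
    intro j hj
    rw [natDegree_X_pow]
    apply Nat.pow_le_pow_right (by norm_num)
    simp only [Finset.mem_range] at hj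
    omega
  have hcards : Fintype.card K ≤ P.natDegree := by
    have hsub : (Finset.univ : Finset K) ⊆ P.roots.toFinset := by
      intro x _
      rw [Multiset.mem_toFinset, mem_roots hPne]
      exact hroot x
    calc Fintype.card K = (Finset.univ : Finset K).card := rfl
    _ ≤ P.roots.toFinset.card := Finset.card_le_card hsub
    _ ≤ Multiset.card P.roots := Multiset.toFinset_card_le _
    _ ≤ P.natDegree := card_roots' _
  rw [hcard] at hcards
  have : 2 ^ (2 * k - 1) < 2 ^ (2 * k) := Nat.pow_lt_pow_right (by norm_num) (by omega)
  omega

/-- The subfield `F_{2^k}` as a finset. -/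
noncomputable def Fs (k : ℕ) : Finset K := Finset.univ.filter fun a : K => a ^ 2 ^ k = a

lemma mem_Fs {k : ℕ} {a : K} : a ∈ Fs k ↔ a ^ 2 ^ k = a := by
  simp [Fs]

lemma Fs_add {k : ℕ} {a b : K} (ha : a ∈ Fs k) (hb : b ∈ Fs k) : a + b ∈ Fs k := by
  rw [mem_Fs] at *
  rw [add_pow2pow, ha, hb]

lemma Fs_mul {k : ℕ} {a b : K} (ha : a ∈ Fs k) (hb : b ∈ Fs k) : a * b ∈ Fs k := by
  rw [mem_Fs] at *
  rw [mul_pow, ha, hb]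

lemma Fs_inv {k : ℕ} {a : K} (ha : a ∈ Fs k) : a⁻¹ ∈ Fs k := by
  rw [mem_Fs] at *
  rw [inv_pow, ha]

lemma Fs_pow2pow {k : ℕ} {a : K} (ha : a ∈ Fs k) (j : ℕ) : a ^ 2 ^ j ∈ Fs k := by
  rw [mem_Fs] at *
  rw [← pow_mul, mul_comm, pow_mul, ha]

lemma pow2pow_mem_Fs_iff {k j : ℕ} {a : K} : a ^ 2 ^ j ∈ Fs k ↔ a ∈ Fs k := by
  constructor
  · rw [mem_Fs, mem_Fs]
    intro hmem
    apply pow2pow_inj j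
    simp only
    rw [← pow_mul, mul_comm, pow_mul] at hmem
    exact hmem
  · intro hmem; exact Fs_pow2pow hmem j

lemma Tmap_mem_Fs {k : ℕ} (hcard : Fintype.card K = 2 ^ (2 * k)) (x : K) :
    x + x ^ 2 ^ k ∈ Fs k := by
  rw [mem_Fs, add_pow2pow, ← pow_mul, ← pow_add]
  have : k + k = 2 * k := by ring
  rw [this, pow_card_K hcard, add_comm]

lemma Tmap_Fs_eq_zero {k : ℕ} {t : K} (ht : t ∈ Fs k) : t + t ^ 2 ^ k = 0 := by
  haveI := charK (K := K)
  rw [mem_Fs] at ht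
  rw [ht, CharTwo.add_self_eq_zero]

/-- Re-indexing a sum over the fiber of the relative trace map by the subfield. -/
lemma sum_fiber {k : ℕ} (x₀ : K) (g : K → ℤ) :
    ∑ x ∈ Finset.univ.filter (fun x : K => x + x ^ 2 ^ k = x₀ + x₀ ^ 2 ^ k), g x
      = ∑ t ∈ Fs k, g (x₀ + t) := by
  haveI := charK (K := K)
  have h2 : (2 : K) = 0 := CharTwo.two_eq_zero
  apply Finset.sum_nbij' (i := fun x => x₀ + x) (j := fun t => x₀ + t)
  · intro x hx
    simp only [Finset.mem_filter, Finset.mem_univ, true_and] at hx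
    rw [mem_Fs, add_pow2pow]
    linear_combination hx + (x₀ ^ 2 ^ k - x) * h2
  · intro t ht
    rw [mem_Fs] at ht
    simp only [Finset.mem_filter, Finset.mem_univ, true_and]
    rw [add_pow2pow, ht]
    linear_combination t * h2
  · intro x _
    show x₀ + (x₀ + x) = x
    rw [← add_assoc, CharTwo.add_self_eq_zero, zero_add]
  · intro t _
    show x₀ + (x₀ + t) = t
    rw [← add_assoc, CharTwo.add_self_eq_zero, zero_add]
  · intro x _
    have : x₀ + (x₀ + x) = x := by
      rw [← add_assoc, CharTwo.add_self_eq_zero, zero_add]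
    conv_lhs => rw [← this]

lemma card_Fs_and_image {k : ℕ} (hk : 0 < k) (hcard : Fintype.card K = 2 ^ (2 * k)) :
    (Fs k : Finset K).card = 2 ^ k ∧
      (Finset.univ.image fun x : K => x + x ^ 2 ^ k) = (Fs k : Finset K) := by
  have hfibcard : ∀ x₀ : K,
      (Finset.univ.filter fun x : K => x + x ^ 2 ^ k = x₀ + x₀ ^ 2 ^ k).card
        = (Fs k : Finset K).card := by
    intro x₀
    have := sum_fiber (K := K) (k := k) x₀ (fun _ => (1 : ℤ))
    simp only [Finset.sum_const, nsmul_eq_mul, mul_one] at this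
    exact_mod_cast this
  have hsum : Fintype.card K
      = ∑ u ∈ Finset.univ.image (fun x : K => x + x ^ 2 ^ k),
          (Finset.univ.filter fun x : K => x + x ^ 2 ^ k = u).card := by
    rw [← Finset.card_univ]
    exact Finset.card_eq_sum_card_fiberwise (fun x _ => Finset.mem_image_of_mem _ (Finset.mem_univ x))
  have hconst : Fintype.card K
      = (Finset.univ.image fun x : K => x + x ^ 2 ^ k).card * (Fs k : Finset K).card := by
    have hc : ∑ u ∈ Finset.univ.image (fun x : K => x + x ^ 2 ^ k),
        (Finset.univ.filter fun x : K => x + x ^ 2 ^ k = u).card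
        = ∑ _u ∈ Finset.univ.image (fun x : K => x + x ^ 2 ^ k), (Fs k : Finset K).card :=
      Finset.sum_congr rfl (fun u hu => by
        obtain ⟨x₀, _, rfl⟩ := Finset.mem_image.mp hu
        exact hfibcard x₀)
    rw [hsum, hc, Finset.sum_const, smul_eq_mul]
  have himsub : (Finset.univ.image fun x : K => x + x ^ 2 ^ k) ⊆ Fs k := by
    intro u hu
    obtain ⟨x₀, _, rfl⟩ := Finset.mem_image.mp hu
    exact Tmap_mem_Fs hcard x₀
  have h1 : (Finset.univ.image fun x : K => x + x ^ 2 ^ k).card ≤ (Fs k : Finset K).card :=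
    Finset.card_le_card himsub
  have h2 : (Fs k : Finset K).card ≤ 2 ^ k := by
    apply card_filter_pow_le
    calc (2:ℕ) = 2 ^ 1 := rfl
    _ ≤ 2 ^ k := Nat.pow_le_pow_right (by norm_num) hk
  have heq : 2 ^ k * 2 ^ k
      = (Finset.univ.image fun x : K => x + x ^ 2 ^ k).card * (Fs k : Finset K).card := by
    rw [← hconst, hcard, two_mul, pow_add]
  have key : (Fs k : Finset K).card = 2 ^ k := by
    by_contra hne
    have hlt : (Fs k : Finset K).card < 2 ^ k := lt_of_le_of_ne h2 hne
    nlinarith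
  have himcard : (Finset.univ.image fun x : K => x + x ^ 2 ^ k).card = 2 ^ k := by
    rw [key] at heq
    have hpos : 0 < 2 ^ k := Nat.pow_pos (by norm_num)
    exact (Nat.eq_of_mul_eq_mul_right hpos heq.symm)
  exact ⟨key, Finset.eq_of_subset_of_card_le himsub (by rw [key, himcard])⟩

lemma exists_T_pre {k : ℕ} (hk : 0 < k) (hcard : Fintype.card K = 2 ^ (2 * k)) {u : K}
    (hu : u ∈ Fs k) : ∃ x : K, x + x ^ 2 ^ k = u := by
  have := (card_Fs_and_image hk hcard).2
  rw [← this] at hu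
  obtain ⟨x, _, hx⟩ := Finset.mem_image.mp hu
  exact ⟨x, hx⟩

lemma tr_zero_on_Fs {k : ℕ} (hk : 0 < k) (hcard : Fintype.card K = 2 ^ (2 * k)) {a : K}
    (ha : a ∈ Fs k) : tr a = 0 := by
  haveI := charK (K := K)
  apply (algebraMap (ZMod 2) K).injective
  rw [trace_formula k hcard, map_zero]
  rw [mem_Fs] at ha
  have hsplit : ∑ j ∈ range (2 * k), a ^ 2 ^ j
      = ∑ j ∈ range k, a ^ 2 ^ j + ∑ j ∈ range k, a ^ 2 ^ (k + j) := by
    rw [two_mul, Finset.sum_range_add]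
  have hshift : ∀ j : ℕ, a ^ 2 ^ (k + j) = a ^ 2 ^ j := by
    intro j
    rw [pow_add, mul_comm, pow_mul, ← pow_mul, mul_comm, pow_mul, ha]
  rw [hsplit, Finset.sum_congr rfl (fun j _ => hshift j)]
  rw [← two_mul]
  rw [show (2 : K) = 0 from CharTwo.two_eq_zero, zero_mul]

lemma chr_add (a b : ZMod 2) : chr (a + b) = chr a * chr b := by revert a b; decide

lemma chr_one' : chr 1 = -1 := rfl

lemma chr_cases (a : ZMod 2) : chr a = 1 ∨ chr a = -1 := by revert a; decide

lemma decomp {k : ℕ} (hk : 0 < k) (hcard : Fintype.card K = 2 ^ (2 * k)) {γ : K}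
    (hγ : γ ∉ Fs k) (z : K) : ∃ a b : K, a ∈ Fs k ∧ b ∈ Fs k ∧ z = a + γ * b := by
  haveI := charK (K := K)
  set S : Finset (K × K) := (Fs k : Finset K) ×ˢ (Fs k : Finset K) with hS
  have hinj : Set.InjOn (fun p : K × K => p.1 + γ * p.2) S := by
    intro p hp p' hp' heq
    simp only [hS, Finset.coe_product, Set.mem_prod, Finset.mem_coe, mem_Fs] at hp hp'
    simp only at heq
    by_cases hb : p.2 = p'.2
    · have : p.1 = p'.1 := by
        rw [hb] at heq
        exact add_right_cancel heq
      exact Prod.ext this hb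
    · exfalso
      apply hγ
      have hγeq : γ = (p.1 + p'.1) * (p.2 + p'.2)⁻¹ := by
        have hne : p.2 + p'.2 ≠ 0 := by
          intro h0
          apply hb
          have := CharTwo.add_eq_iff_eq_add.mp h0
          rw [this, zero_add]
        field_simp
        linear_combination heq + (γ * p'.2 + p'.1) * (CharTwo.two_eq_zero (R := K)) - (p'.1 + p.1) * (CharTwo.two_eq_zero (R := K))
      rw [hγeq]
      exact Fs_mul (Fs_add (mem_Fs.mpr hp.1) (mem_Fs.mpr hp'.1))
        (Fs_inv (Fs_add (mem_Fs.mpr hp.2) (mem_Fs.mpr hp'.2)))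
  have hcardS : (S.image fun p : K × K => p.1 + γ * p.2).card = Fintype.card K := by
    rw [Finset.card_image_of_injOn hinj, hS, Finset.card_product,
      (card_Fs_and_image hk hcard).1, hcard, two_mul, pow_add]
  have himuniv : S.image (fun p : K × K => p.1 + γ * p.2) = Finset.univ :=
    Finset.eq_univ_of_card _ hcardS
  have hz : z ∈ S.image (fun p : K × K => p.1 + γ * p.2) := by
    rw [himuniv]; exact Finset.mem_univ z
  obtain ⟨p, hp, hpz⟩ := Finset.mem_image.mp hz
  simp only [hS, Finset.mem_product] at hp
  exact ⟨p.1, p.2, hp.1, hp.2, hpz.symm⟩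

lemma gamma_mul_mem {k : ℕ} {γ c : K} (hγ : γ ∉ Fs k) (hc : c ∈ Fs k)
    (h : γ * c ∈ Fs k) : c = 0 := by
  by_contra hne
  apply hγ
  have : γ = (γ * c) * c⁻¹ := by field_simp
  rw [this]
  exact Fs_mul h (Fs_inv hc)

lemma exists_b {k : ℕ} (hk : 0 < k) (hcard : Fintype.card K = 2 ^ (2 * k)) {γ : K}
    (hγ : γ ∉ Fs k) : ∃ b ∈ Fs k, tr (γ * b) = 1 := by
  obtain ⟨x, hx⟩ := exists_tr_one hk hcard
  obtain ⟨a, b, ha, hb, rfl⟩ := decomp hk hcard hγ x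
  refine ⟨b, hb, ?_⟩
  rw [tr_add, tr_zero_on_Fs hk hcard ha, zero_add] at hx
  exact hx

lemma sum_shift_Fs {k : ℕ} {b : K} (hb : b ∈ Fs k) (g : K → ℤ) :
    ∑ t ∈ Fs k, g (t + b) = ∑ t ∈ Fs k, g t := by
  haveI := charK (K := K)
  apply Finset.sum_nbij' (i := fun t => t + b) (j := fun t => t + b)
  · intro t ht; exact Fs_add ht hb
  · intro t ht; exact Fs_add ht hb
  · intro t _; show t + b + b = t; rw [add_assoc, CharTwo.add_self_eq_zero, add_zero]
  · intro t _; show t + b + b = t; rw [add_assoc, CharTwo.add_self_eq_zero, add_zero]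
  · intro t _; rfl

lemma char_sum_Fs {k : ℕ} (hk : 0 < k) (hcard : Fintype.card K = 2 ^ (2 * k)) (c : K) :
    ∑ t ∈ Fs k, chr (tr (c * t)) = if c ∈ Fs k then ((2 : ℤ) ^ k) else 0 := by
  by_cases hc : c ∈ Fs k
  · rw [if_pos hc]
    have hone : ∀ t ∈ Fs k, chr (tr (c * t)) = 1 := by
      intro t ht
      rw [tr_zero_on_Fs hk hcard (Fs_mul hc ht)]
      rfl
    rw [Finset.sum_congr rfl hone, Finset.sum_const, (card_Fs_and_image hk hcard).1]
    simp
  · rw [if_neg hc]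
    obtain ⟨b, hb, htr⟩ := exists_b hk hcard hc
    have hre : ∑ t ∈ Fs k, chr (tr (c * t)) = ∑ t ∈ Fs k, chr (tr (c * (t + b))) := by
      rw [sum_shift_Fs hb (fun t => chr (tr (c * t)))]
    have hneg : ∀ t ∈ Fs k, chr (tr (c * (t + b))) = - chr (tr (c * t)) := by
      intro t _
      rw [mul_add, tr_add, htr, chr_add, chr_one']
      ring
    rw [Finset.sum_congr rfl hneg, Finset.sum_neg_distrib] at hre
    linarith

lemma trk_eq_tr {k : ℕ} (hk : 0 < k) (hcard : Fintype.card K = 2 ^ (2 * k)) (v : K) :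
    trk k (v + v ^ 2 ^ k) = tr v := by
  have hsum : ∑ j ∈ Finset.range k, (v + v ^ 2 ^ k) ^ 2 ^ j
      = algebraMap (ZMod 2) K (tr v) := by
    rw [trace_formula k hcard]
    have hterm : ∀ j : ℕ, (v + v ^ 2 ^ k) ^ 2 ^ j = v ^ 2 ^ j + v ^ 2 ^ (k + j) := by
      intro j
      rw [add_pow2pow]
      congr 1
      rw [← pow_mul, ← pow_add]
    rw [Finset.sum_congr rfl (fun j _ => hterm j), Finset.sum_add_distrib]
    rw [two_mul, Finset.sum_range_add]
  by_cases htv : tr v = 0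
  · rw [htv, map_zero] at hsum
    rw [trk, if_pos hsum, htv]
  · have h1 : tr v = 1 := by
      revert htv
      generalize tr v = b
      revert b; decide
    rw [h1, map_one] at hsum
    rw [trk, if_neg (by rw [hsum]; exact one_ne_zero), h1]

theorem stmt13 (k i : ℕ) (hk : 0 < k) (hcard : Fintype.card K = 2 ^ (2 * k))
    (h : K → K)
    (hperm : Set.BijOn h {a : K | a ^ (2 ^ k) = a} {a : K | a ^ (2 ^ k) = a})
    (α : K) (hα : α ^ (2 ^ k) ≠ α) :
    ∀ β : K, β ^ (2 ^ k) = β → β ≠ 0 →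
      IsBentF k (fun x =>
        trk k (β * (α * (x ^ (2 ^ i) * h (x + x ^ (2 ^ k))) +
          (α * (x ^ (2 ^ i) * h (x + x ^ (2 ^ k)))) ^ (2 ^ k)))) := by
  intro β hβ hβ0 l
  haveI := charK (K := K)
  have h2 : (2 : K) = 0 := CharTwo.two_eq_zero
  set γ : K := β * α with hγdef
  have hγ : γ ∉ Fs k := by
    intro hmem
    rw [mem_Fs, hγdef, mul_pow, hβ] at hmem
    exact hα (mul_left_cancel₀ hβ0 hmem)
  -- the Frobenius power equivalence
  set E : K ≃ K := Equiv.ofBijective (fun x : K => x ^ 2 ^ i) ⟨pow2pow_inj i, pow2pow_surj i⟩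
    with hE
  have hEapp : ∀ z : K, (E.symm z) ^ 2 ^ i = z := by
    intro z
    exact E.apply_symm_apply z
  set m : K → K := fun u => E.symm (γ * h u) + l with hm
  -- Step 1: pointwise rewriting of the summand
  have hpt : ∀ x : K,
      trk k (β * (α * (x ^ (2 ^ i) * h (x + x ^ (2 ^ k))) +
          (α * (x ^ (2 ^ i) * h (x + x ^ (2 ^ k)))) ^ (2 ^ k))) + tr (l * x)
        = tr (m (x + x ^ 2 ^ k) * x) := by
    intro x
    have e1 : ∀ Y : K, β * (Y + Y ^ 2 ^ k) = (β * Y) + (β * Y) ^ 2 ^ k := by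
      intro Y
      rw [mul_pow, hβ]; ring
    rw [e1, trk_eq_tr hk hcard]
    have e4 : (E.symm (γ * h (x + x ^ 2 ^ k)) * x) ^ 2 ^ i
        = β * (α * (x ^ 2 ^ i * h (x + x ^ 2 ^ k))) := by
      rw [mul_pow, hEapp, hγdef]; ring
    rw [← e4, tr_pow2pow hk hcard, ← tr_add]
    congr 1
    simp only [hm]
    ring
  -- Step 2: the Walsh coefficient as a fiberwise sum
  have hw : walshF (K := K) (fun x =>
      trk k (β * (α * (x ^ (2 ^ i) * h (x + x ^ (2 ^ k))) +
        (α * (x ^ (2 ^ i) * h (x + x ^ (2 ^ k)))) ^ (2 ^ k)))) l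
      = ∑ u ∈ Fs k, ∑ x ∈ Finset.univ.filter (fun x : K => x + x ^ 2 ^ k = u),
          chr (tr (m u * x)) := by
    rw [walshF]
    rw [Finset.sum_congr rfl (fun x _ => by rw [hpt x])]
    rw [← Finset.sum_fiberwise_of_maps_to (fun x _ => Tmap_mem_Fs hcard x)
      (fun x => chr (tr (m (x + x ^ 2 ^ k) * x)))]
    apply Finset.sum_congr rfl
    intro u _
    apply Finset.sum_congr rfl
    intro x hx
    simp only [Finset.mem_filter] at hx
    rw [hx.2]
  -- Step 3: evaluation of the inner sums
  have hinner : ∀ u ∈ Fs k, ∃ x₀ : K,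
      ∑ x ∈ Finset.univ.filter (fun x : K => x + x ^ 2 ^ k = u), chr (tr (m u * x))
        = chr (tr (m u * x₀)) * (if m u ∈ Fs k then ((2:ℤ) ^ k) else 0) := by
    intro u hu
    obtain ⟨x₀, hx₀⟩ := exists_T_pre hk hcard hu
    refine ⟨x₀, ?_⟩
    have hfeq : Finset.univ.filter (fun x : K => x + x ^ 2 ^ k = u)
        = Finset.univ.filter (fun x : K => x + x ^ 2 ^ k = x₀ + x₀ ^ 2 ^ k) := by
      rw [hx₀]
    rw [hfeq, sum_fiber (k := k) x₀]
    have e5 : ∀ t ∈ Fs k, chr (tr (m u * (x₀ + t)))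
        = chr (tr (m u * x₀)) * chr (tr (m u * t)) := by
      intro t _
      rw [mul_add, tr_add, chr_add]
    rw [Finset.sum_congr rfl e5, ← Finset.mul_sum, char_sum_Fs hk hcard]
  -- Step 4: the unique subfield element where the inner sum does not vanish
  obtain ⟨a, b, ha, hb, hab⟩ := decomp hk hcard hγ (l ^ 2 ^ i)
  obtain ⟨u₀, hu₀s, hu₀b⟩ := hperm.2.2 (show b ∈ {a : K | a ^ 2 ^ k = a} from mem_Fs.mp hb)
  have hu₀ : u₀ ∈ Fs k := mem_Fs.mpr hu₀s
  have hmpow : ∀ u : K, (m u) ^ 2 ^ i = γ * h u + l ^ 2 ^ i := by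
    intro u
    rw [hm]
    simp only
    rw [add_pow2pow, hEapp]
  have hcond : ∀ u ∈ Fs k, (m u ∈ Fs k ↔ u = u₀) := by
    intro u hu
    have hhu : h u ∈ Fs k := mem_Fs.mpr (hperm.1 (mem_Fs.mp hu))
    constructor
    · intro hmem
      have hmem2 : γ * h u + l ^ 2 ^ i ∈ Fs k := by
        rw [← hmpow u]
        exact (pow2pow_mem_Fs_iff).mpr hmem
      rw [hab] at hmem2
      have e6 : γ * (h u + b) = (γ * h u + (a + γ * b)) + a := by
        linear_combination (-a) * h2
      have hmem3 : γ * (h u + b) ∈ Fs k := by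
        rw [e6]
        exact Fs_add hmem2 ha
      have h0 : h u + b = 0 := gamma_mul_mem hγ (Fs_add hhu hb) hmem3
      have hub : h u = b := by linear_combination h0 - b * h2
      exact hperm.2.1 (mem_Fs.mp hu) hu₀s (by rw [hub, hu₀b])
    · intro hueq
      subst hueq
      rw [← pow2pow_mem_Fs_iff (j := i), hmpow, hab, hu₀b]
      have e7 : γ * b + (a + γ * b) = a := by linear_combination γ * b * h2
      rw [e7]
      exact ha
  -- Step 5: assemble
  rw [hw]
  obtain ⟨x₀, hx₀⟩ := hinner u₀ hu₀
  have hzero : ∀ u ∈ Fs k, u ≠ u₀ →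
      ∑ x ∈ Finset.univ.filter (fun x : K => x + x ^ 2 ^ k = u), chr (tr (m u * x)) = 0 := by
    intro u hu hne
    obtain ⟨x₁, hx₁⟩ := hinner u hu
    rw [hx₁, if_neg (fun hmem => hne ((hcond u hu).mp hmem)), mul_zero]
  rw [Finset.sum_eq_single_of_mem u₀ hu₀ hzero, hx₀,
    if_pos ((hcond u₀ hu₀).mpr rfl)]
  rcases chr_cases (tr (m u₀ * x₀)) with hc | hc <;> rw [hc]
  · left; norm_num
  · right; norm_num
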